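/- Let μ be an absolutely continuous finite positive Borel measure on ℝ with a bounded density ρ, let k ∈ ℕ, and let E ⊂ ℝ be a measurable set with μ(E) > 0. Then there exist points a₀, …, a_k ∈ E such that for every m ∈ {0, …, k}, ‖ρ‖_∞^k · ∏_{j=0, j≠m}^{k} |a_j − a_m| ≥ (μ(E)/(4e))^k. -/

import Mathlib

open MeasureTheory Finset Set Filter Topology

noncomputable section

open Finset Set Filter Topology in
-- (k+1)^k ≤ k! * e^k
lemma aux_pow_le_factorial (k : ℕ) :
    ((k : ℝ) + 1) ^ k ≤ (k.factorial : ℝ) * Real.exp 1 ^ k := by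
  induction k with
  | zero => simp
  | succ n ih =>
    push_cast
    have he : ((n : ℝ) + 2) ^ (n + 1) ≤ ((n : ℝ) + 1) ^ (n + 1) * Real.exp 1 := by
      have h1 : (0:ℝ) < (n:ℝ) + 1 := by positivity
      have hb : ((n:ℝ) + 2) = ((n:ℝ)+1) * (1 + 1/((n:ℝ)+1)) := by field_simp; ring
      have h2 : (1 + 1/((n:ℝ)+1)) ^ (n+1) ≤ Real.exp 1 := by
        have := Real.add_one_le_exp (1/((n:ℝ)+1))
        calc (1 + 1/((n:ℝ)+1)) ^ (n+1) ≤ (Real.exp (1/((n:ℝ)+1))) ^ (n+1) := by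
              apply pow_le_pow_left₀ (by positivity) (by linarith)
          _ = Real.exp (((n:ℝ)+1) * (1/((n:ℝ)+1))) := by
              rw [← Real.exp_nat_mul]; push_cast; ring_nf
          _ = Real.exp 1 := by rw [mul_one_div, div_self (ne_of_gt h1)]
      calc ((n : ℝ) + 2) ^ (n + 1) = ((n:ℝ)+1)^(n+1) * (1 + 1/((n:ℝ)+1)) ^ (n+1) := by
            rw [hb, mul_pow]
        _ ≤ ((n:ℝ)+1)^(n+1) * Real.exp 1 := by
            apply mul_le_mul_of_nonneg_left h2 (by positivity)
    have : ((n : ℝ) + 1) ^ (n+1) = ((n:ℝ)+1) * ((n:ℝ)+1)^n := by ring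
    calc ((n:ℝ) + 1 + 1) ^ (n+1) = ((n:ℝ)+2)^(n+1) := by ring_nf
      _ ≤ ((n:ℝ)+1)^(n+1) * Real.exp 1 := he
      _ = ((n:ℝ)+1) * ((n:ℝ)+1)^n * Real.exp 1 := by rw [this]
      _ ≤ ((n:ℝ)+1) * ((n.factorial : ℝ) * Real.exp 1 ^ n) * Real.exp 1 := by
          apply mul_le_mul_of_nonneg_right _ (Real.exp_pos 1).le
          exact mul_le_mul_of_nonneg_left ih (by positivity)
      _ = ((n+1).factorial : ℝ) * Real.exp 1 ^ (n+1) := by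
          rw [Nat.factorial_succ]; push_cast; ring

-- choose ≤ 2^k
lemma aux_fact_le (k m : ℕ) (hm : m ≤ k) :
    (k.factorial : ℝ) ≤ 2 ^ k * (m.factorial * (k - m).factorial) := by
  have h := Nat.choose_mul_factorial_mul_factorial hm
  have h2 : k.choose m ≤ 2 ^ k := by
    calc k.choose m ≤ ∑ i ∈ Finset.range (k+1), k.choose i :=
          Finset.single_le_sum (fun i _ => Nat.zero_le _)
            (Finset.mem_range.mpr (Nat.lt_succ_of_le hm))
      _ = 2 ^ k := Nat.sum_range_choose k
  have : (k.factorial : ℝ) = (k.choose m : ℝ) * (m.factorial * (k-m).factorial) := by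
    rw [← h]; push_cast; ring
  rw [this]
  apply mul_le_mul_of_nonneg_right _ (by positivity)
  exact_mod_cast h2

lemma aux_prod_nat_lower (m : ℕ) : ∏ j ∈ range m, (m - j) = m.factorial := by
  have := Finset.prod_range_reflect (fun j => m - j) m
  rw [← this, ← Finset.prod_range_add_one_eq_factorial]
  exact Finset.prod_congr rfl fun j hj => by rw [Finset.mem_range] at hj; omega

lemma aux_prod_nat_upper (m k : ℕ) : ∏ j ∈ Ico (m+1) (k+1), (j - m) = (k - m).factorial := by
  rw [Finset.prod_Ico_eq_prod_range, ← Finset.prod_range_add_one_eq_factorial,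
    Nat.succ_sub_succ]
  exact Finset.prod_congr rfl fun j _ => by omega

lemma aux_prod_fin (k : ℕ) (m : Fin (k+1)) :
    ∏ j ∈ Finset.univ.erase m, |((j : Fin (k+1)) : ℝ) - ((m : Fin (k+1)) : ℝ)| =
      (m : ℕ).factorial * (k - (m : ℕ)).factorial := by
  have hval : ∏ j ∈ Finset.univ.erase m, |((j : Fin (k+1)) : ℝ) - (m : ℝ)| =
      ∏ i ∈ (Finset.range (k+1)).erase (m : ℕ), |(i : ℝ) - (m : ℝ)| := by
    refine Finset.prod_nbij (fun j => (j : ℕ)) ?_ ?_ ?_ ?_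
    · intro j hj
      simp only [Finset.mem_erase, Finset.mem_range] at *
      exact ⟨fun h => hj.1 (Fin.val_injective h), j.isLt⟩
    · intro a _ b _ hab
      exact Fin.val_injective hab
    · intro i hi
      simp only [Finset.coe_erase, Finset.mem_coe, Finset.mem_range,
        Set.mem_diff, Set.mem_singleton_iff] at hi
      refine ⟨⟨i, hi.1⟩, ?_, rfl⟩
      simp only [Finset.coe_erase, Set.mem_diff, Finset.mem_coe, Finset.mem_univ,
        Set.mem_singleton_iff, true_and]
      exact fun h => hi.2 (congrArg Fin.val h)
    · intro j _; rfl
  rw [hval]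
  have hsplit : (Finset.range (k+1)).erase (m : ℕ) =
      Finset.range (m : ℕ) ∪ Finset.Ico ((m : ℕ)+1) (k+1) := by
    ext i
    simp only [Finset.mem_erase, Finset.mem_range, Finset.mem_union, Finset.mem_Ico]
    have := m.isLt
    omega
  have hdisj : Disjoint (Finset.range (m : ℕ)) (Finset.Ico ((m : ℕ)+1) (k+1)) := by
    rw [Finset.disjoint_left]
    intro i hi hi'
    simp only [Finset.mem_range, Finset.mem_Ico] at *
    omega
  rw [hsplit, Finset.prod_union hdisj]
  have h1 : ∏ i ∈ Finset.range (m : ℕ), |(i : ℝ) - (m : ℝ)| = ((m : ℕ).factorial : ℝ) := by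
    rw [← aux_prod_nat_lower (m : ℕ), Nat.cast_prod]
    refine Finset.prod_congr rfl fun i hi => ?_
    rw [Finset.mem_range] at hi
    rw [Nat.cast_sub hi.le, abs_sub_comm]
    exact abs_of_nonneg (sub_nonneg.mpr (by exact_mod_cast hi.le))
  have h2 : ∏ i ∈ Finset.Ico ((m : ℕ)+1) (k+1), |(i : ℝ) - (m : ℝ)|
      = ((k - (m : ℕ)).factorial : ℝ) := by
    rw [← aux_prod_nat_upper (m : ℕ) k, Nat.cast_prod]
    refine Finset.prod_congr rfl fun i hi => ?_
    rw [Finset.mem_Ico] at hi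
    have him : (m : ℕ) ≤ i := by omega
    rw [Nat.cast_sub him]
    exact abs_of_nonneg (sub_nonneg.mpr (by exact_mod_cast him))
  rw [h1, h2]

/-- **Selection of well-separated points in a set of positive measure.**
Let `μ` be an absolutely continuous finite positive Borel measure on `ℝ` with a bounded
density `ρ`, and let `E` be a measurable set of positive `μ`-measure.  Then there exist
points `a₀, …, a_k ∈ E` such that for every `m ∈ {0, …, k}`,
`‖ρ‖_∞^k · ∏_{j ≠ m} |a_j - a_m| ≥ (μ(E)/(4e))^k`. -/
theorem points_selection (μ : Measure ℝ) (hfin : IsFiniteMeasure μ) (ρ : ℝ → ℝ)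
    (hρ0 : ∀ x, 0 ≤ ρ x)
    (hd : μ = volume.withDensity fun x => ENNReal.ofReal (ρ x))
    (hbdd : ∃ M : ℝ, ∀ᵐ x ∂(volume : Measure ℝ), ρ x ≤ M)
    (k : ℕ) (E : Set ℝ) (hE : MeasurableSet E) (hμE : 0 < μ E) :
    ∃ a : Fin (k + 1) → ℝ, (∀ i, a i ∈ E) ∧
      ∀ m : Fin (k + 1),
        ((μ E).toReal / (4 * Real.exp 1)) ^ k ≤
          (essSup (fun x => |ρ x|) (volume : Measure ℝ)) ^ k *
            ∏ j ∈ Finset.univ.erase m, |a j - a m| := by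
  classical
  obtain ⟨M, hM⟩ := hbdd
  set L := essSup (fun x => |ρ x|) (volume : Measure ℝ) with hL_def
  have hbddU : Filter.IsBoundedUnder (· ≤ ·) (ae (volume : Measure ℝ)) fun x => |ρ x| :=
    ⟨M, Filter.eventually_map.mpr (by filter_upwards [hM] with x hx; rwa [abs_of_nonneg (hρ0 x)])⟩
  have haeL : ∀ᵐ x ∂(volume : Measure ℝ), |ρ x| ≤ L := ae_le_essSup hbddU
  have hμEfin : μ E ≠ ⊤ := measure_ne_top μ E
  set lam := (μ E).toReal with hlam_def
  have hlam : 0 < lam := ENNReal.toReal_pos hμE.ne' hμEfin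
  -- measure bound
  have hmono : ∀ s : Set ℝ, MeasurableSet s → μ s ≤ ENNReal.ofReal L * volume s := by
    intro s hs
    rw [hd, withDensity_apply _ hs]
    calc ∫⁻ x in s, ENNReal.ofReal (ρ x) ≤ ∫⁻ x in s, ENNReal.ofReal L := by
          refine setLIntegral_mono_ae' hs ?_
          filter_upwards [haeL] with x hx _
          exact ENNReal.ofReal_le_ofReal ((le_abs_self _).trans hx)
      _ = ENNReal.ofReal L * volume s := by rw [setLIntegral_const]
  have hLpos : 0 < L := by
    by_contra h
    push_neg at h
    have h0 : ENNReal.ofReal L = 0 := ENNReal.ofReal_eq_zero.mpr h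
    have := hmono E hE
    rw [h0, zero_mul, le_zero_iff] at this
    exact hμE.ne' this
  -- the distribution function
  set F : ℝ → ℝ := fun x => (μ (E ∩ Set.Iic x)).toReal with hF_def
  have hFfin : ∀ x, μ (E ∩ Set.Iic x) ≠ ⊤ := fun x => measure_ne_top _ _
  have hFmono : Monotone F := by
    intro x y hxy
    exact ENNReal.toReal_le_toReal (hFfin x) (hFfin y) |>.mpr
      (measure_mono (inter_subset_inter_right _ (Set.Iic_subset_Iic.mpr hxy)))
  have hFdiff : ∀ x y : ℝ, x ≤ y → F y - F x = (μ (E ∩ Set.Ioc x y)).toReal := by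
    intro x y hxy
    have hsplit : E ∩ Set.Iic y = (E ∩ Set.Iic x) ∪ (E ∩ Set.Ioc x y) := by
      rw [← Set.inter_union_distrib_left, Set.Iic_union_Ioc_eq_Iic hxy]
    have hdisj : Disjoint (E ∩ Set.Iic x) (E ∩ Set.Ioc x y) := by
      refine Set.disjoint_left.mpr fun a ha ha' => ?_
      exact absurd ha.2 (not_le.mpr ha'.2.1)
    have := measure_union (μ := μ) hdisj (hE.inter measurableSet_Ioc)
    rw [← hsplit] at this
    rw [hF_def]
    simp only
    rw [this, ENNReal.toReal_add (hFfin x) (measure_ne_top _ _)]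
    ring
  have hFlip : ∀ x y : ℝ, x ≤ y → F y - F x ≤ L * (y - x) := by
    intro x y hxy
    rw [hFdiff x y hxy]
    have h1 : μ (E ∩ Set.Ioc x y) ≤ ENNReal.ofReal (L * (y - x)) := by
      calc μ (E ∩ Set.Ioc x y) ≤ μ (Set.Ioc x y) := measure_mono inter_subset_right
        _ ≤ ENNReal.ofReal L * volume (Set.Ioc x y) := hmono _ measurableSet_Ioc
        _ = ENNReal.ofReal (L * (y - x)) := by
            rw [Real.volume_Ioc, ← ENNReal.ofReal_mul hLpos.le]
    exact ENNReal.toReal_le_of_le_ofReal (by nlinarith) h1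
  have hFcont : Continuous F := by
    have : LipschitzWith L.toNNReal F := by
      refine LipschitzWith.of_dist_le_mul fun x y => ?_
      have hL' : (L.toNNReal : ℝ) = L := Real.coe_toNNReal _ hLpos.le
      rw [Real.dist_eq, Real.dist_eq, hL']
      rcases le_total x y with h | h
      · rw [abs_of_nonpos (by linarith [hFmono h]), abs_of_nonpos (by linarith)]
        have := hFlip x y h
        linarith
      · rw [abs_of_nonneg (by linarith [hFmono h]), abs_of_nonneg (by linarith)]
        have := hFlip y x h
        linarith
    exact this.continuous
  -- values approach 0 and lam
  have hex_lo : ∀ t : ℝ, 0 < t → ∃ x, F x < t := by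
    intro t ht
    have hiI : Filter.Tendsto (fun n : ℕ => μ (E ∩ Set.Iic (-(n : ℝ)))) Filter.atTop (𝓝 (μ (⋂ n : ℕ, E ∩ Set.Iic (-(n : ℝ))))) :=
      tendsto_measure_iInter_atTop
        (fun n => (hE.inter measurableSet_Iic).nullMeasurableSet)
        (fun n m hnm => inter_subset_inter_right _ (Set.Iic_subset_Iic.mpr (by
          simp only [neg_le_neg_iff, Nat.cast_le]; exact hnm)))
        ⟨0, measure_ne_top _ _⟩
    have hempty : (⋂ n : ℕ, E ∩ Set.Iic (-(n : ℝ))) = ∅ := by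
      apply Set.eq_empty_iff_forall_notMem.mpr
      intro x hx
      obtain ⟨n, hn⟩ := exists_nat_gt (-x)
      have := (Set.mem_iInter.mp hx n).2
      simp only [Set.mem_Iic] at this
      linarith
    rw [hempty, measure_empty] at hiI
    have h2 : Filter.Tendsto (fun n : ℕ => F (-(n : ℝ))) Filter.atTop (𝓝 0) := by
      have := (ENNReal.tendsto_toReal (by simp)).comp hiI
      simpa [hF_def, Function.comp_def] using this
    obtain ⟨n, hn⟩ := (h2.eventually_lt_const ht).exists
    exact ⟨_, hn⟩
  have hex_hi : ∀ t : ℝ, t < lam → ∃ x, t < F x := by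
    intro t ht
    have hiU : Filter.Tendsto (fun n : ℕ => μ (E ∩ Set.Iic (n : ℝ))) Filter.atTop (𝓝 (μ (⋃ n : ℕ, E ∩ Set.Iic (n : ℝ)))) :=
      tendsto_measure_iUnion_atTop
        (fun n m hnm => inter_subset_inter_right _ (Set.Iic_subset_Iic.mpr (by exact_mod_cast hnm)))
    have hall : (⋃ n : ℕ, E ∩ Set.Iic (n : ℝ)) = E := by
      apply Set.Subset.antisymm
      · exact Set.iUnion_subset fun n => inter_subset_left
      · intro x hx
        obtain ⟨n, hn⟩ := exists_nat_gt x
        exact Set.mem_iUnion.mpr ⟨n, hx, hn.le⟩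
    rw [hall] at hiU
    have h2 : Filter.Tendsto (fun n : ℕ => F (n : ℝ)) Filter.atTop (𝓝 lam) := by
      have := (ENNReal.tendsto_toReal hμEfin).comp hiU
      simpa [hF_def, Function.comp_def] using this
    obtain ⟨n, hn⟩ := (h2.eventually_const_lt ht).exists
    exact ⟨_, hn⟩
  -- intermediate value: F attains each t ∈ (0, lam)
  have hsurj : ∀ t : ℝ, 0 < t → t < lam → ∃ x, F x = t := by
    intro t ht ht'
    obtain ⟨x₀, hx₀⟩ := hex_lo t ht
    obtain ⟨x₁, hx₁⟩ := hex_hi t ht'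
    have hx01 : x₀ ≤ x₁ := by
      by_contra h
      push_neg at h
      exact absurd (hFmono h.le) (not_le.mpr (by linarith))
    have := intermediate_value_Icc hx01 hFcont.continuousOn
    obtain ⟨x, _, hx⟩ := this ⟨hx₀.le, hx₁.le⟩
    exact ⟨x, hx⟩
  -- select a point of E with F-value in [u, v]
  have hsel : ∀ u v : ℝ, 0 < u → u < v → v < lam → ∃ a ∈ E, u ≤ F a ∧ F a ≤ v := by
    intro u v hu huv hv
    obtain ⟨x, hx⟩ := hsurj u hu (huv.trans hv)
    obtain ⟨y, hy⟩ := hsurj v (hu.trans huv) hv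
    have hxy : x ≤ y := by
      by_contra h
      push_neg at h
      exact absurd (hFmono h.le) (not_le.mpr (by rw [hx, hy]; linarith))
    have hpos : (μ (E ∩ Set.Ioc x y)).toReal = v - u := by
      rw [← hFdiff x y hxy, hx, hy]
    have hne : (E ∩ Set.Ioc x y).Nonempty := by
      rw [Set.nonempty_iff_ne_empty]
      intro h
      rw [h, measure_empty] at hpos
      simp at hpos
      linarith
    obtain ⟨a, haE, hax, hay⟩ := hne
    exact ⟨a, haE, hx ▸ hFmono hax.le, hy ▸ hFmono hay⟩
  -- choose the points
  set c := lam / (2 * ((k : ℝ) + 1)) with hc_def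
  have hc : 0 < c := by positivity
  have hlamc : lam = 2 * ((k : ℝ) + 1) * c := by
    rw [hc_def]; field_simp
  have hchoice : ∀ i : Fin (k+1), ∃ x ∈ E,
      (4*((i:ℕ):ℝ)+1)*c/2 ≤ F x ∧ F x ≤ (4*((i:ℕ):ℝ)+3)*c/2 := by
    intro i
    have hik : ((i:ℕ):ℝ) ≤ (k : ℝ) := by
      exact_mod_cast Nat.lt_succ_iff.mp i.isLt
    refine hsel _ _ (by positivity) (by nlinarith) ?_
    rw [hlamc]
    nlinarith
  choose a haE haFl haFu using hchoice
  refine ⟨a, haE, ?_⟩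
  intro m
  -- separation of the chosen points
  have hsep : ∀ i j : Fin (k+1), (i:ℕ) < (j:ℕ) →
      (((j:ℕ):ℝ) - ((i:ℕ):ℝ)) * c ≤ L * (a j - a i) := by
    intro i j hij
    have hij' : ((i:ℕ):ℝ) + 1 ≤ ((j:ℕ):ℝ) := by exact_mod_cast hij
    have hFij : F (a i) < F (a j) := by
      have h1 := haFu i
      have h2 := haFl j
      nlinarith
    have hab : a i ≤ a j := by
      by_contra h
      push_neg at h
      exact absurd (hFmono h.le) (not_le.mpr hFij)
    have hlip := hFlip (a i) (a j) hab
    have h1 := haFu i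
    have h2 := haFl j
    nlinarith
  have habs : ∀ j : Fin (k+1), j ≠ m →
      |((j:ℕ):ℝ) - ((m:ℕ):ℝ)| * c ≤ L * |a j - a m| := by
    have key : ∀ i j : Fin (k+1), (i:ℕ) < (j:ℕ) →
        |((j:ℕ):ℝ) - ((i:ℕ):ℝ)| * c ≤ L * |a j - a i| := by
      intro i j hij
      have h1 := hsep i j hij
      have hij' : ((i:ℕ):ℝ) + 1 ≤ ((j:ℕ):ℝ) := by exact_mod_cast hij
      have h2 : 0 < a j - a i := by
        by_contra h
        push_neg at h
        nlinarith
      rw [abs_of_nonneg (by linarith), abs_of_nonneg (by linarith)]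
      exact h1
    intro j hjm
    rcases Nat.lt_or_ge (j:ℕ) (m:ℕ) with h | h
    · have := key j m h
      rwa [abs_sub_comm (((m:ℕ):ℝ)), abs_sub_comm (a m)] at this
    · have h' : (m:ℕ) < (j:ℕ) := lt_of_le_of_ne h (fun hh => hjm (Fin.ext hh.symm))
      exact key m j h'
  -- the product bound
  have hcard : (Finset.univ.erase m).card = k := by
    rw [Finset.card_erase_of_mem (Finset.mem_univ m), Finset.card_univ, Fintype.card_fin]
    omega
  have hprod1 : ∏ j ∈ Finset.univ.erase m, (|((j:ℕ):ℝ) - ((m:ℕ):ℝ)| * (c/L)) ≤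
      ∏ j ∈ Finset.univ.erase m, |a j - a m| := by
    refine Finset.prod_le_prod (fun j _ => by positivity) (fun j hj => ?_)
    have hjm := (Finset.mem_erase.mp hj).1
    have := habs j hjm
    rw [mul_div_assoc' , div_le_iff₀ hLpos]
    nlinarith
  have hprod2 : ∏ j ∈ Finset.univ.erase m, (|((j:ℕ):ℝ) - ((m:ℕ):ℝ)| * (c/L)) =
      (((m:ℕ).factorial : ℝ) * ((k - (m:ℕ)).factorial : ℝ)) * (c/L)^k := by
    rw [Finset.prod_mul_distrib, Finset.prod_const, hcard, aux_prod_fin]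
  -- numeric conclusion
  have hm : (m : ℕ) ≤ k := Nat.lt_succ_iff.mp m.isLt
  have hfact : (((k:ℝ))+1)^k ≤ (((m:ℕ).factorial : ℝ) * ((k - (m:ℕ)).factorial : ℝ)) *
      (2 * Real.exp 1)^k := by
    calc (((k:ℝ))+1)^k ≤ (k.factorial : ℝ) * Real.exp 1 ^ k := aux_pow_le_factorial k
      _ ≤ (2 ^ k * (((m:ℕ).factorial : ℝ) * ((k - (m:ℕ)).factorial : ℝ))) * Real.exp 1 ^ k := by
          exact mul_le_mul_of_nonneg_right (aux_fact_le k (m:ℕ) hm) (by positivity)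
      _ = (((m:ℕ).factorial : ℝ) * ((k - (m:ℕ)).factorial : ℝ)) * (2 * Real.exp 1)^k := by
          rw [mul_pow]; ring
  set A := ((m:ℕ).factorial : ℝ) * ((k - (m:ℕ)).factorial : ℝ) with hA_def
  have hA : 0 < A := by positivity
  have hstep1 : ((((k:ℝ))+1) / (2 * Real.exp 1))^k ≤ A := by
    rw [div_pow, div_le_iff₀ (by positivity)]
    exact hfact
  have hstep2 : A * (c/L)^k ≤ ∏ j ∈ Finset.univ.erase m, |a j - a m| := by
    rw [← hprod2]
    exact hprod1
  calc (lam / (4 * Real.exp 1)) ^ k = c^k * ((((k:ℝ))+1) / (2 * Real.exp 1))^k := by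
        rw [← mul_pow]
        congr 1
        rw [hlamc]
        field_simp
        ring
    _ ≤ c^k * A := mul_le_mul_of_nonneg_left hstep1 (by positivity)
    _ = L^k * (A * (c/L)^k) := by
        have hLk : L ^ k ≠ 0 := pow_ne_zero k hLpos.ne'
        have hcc : (c/L)^k * L^k = c^k := by
          rw [div_pow]
          exact div_mul_cancel₀ _ hLk
        rw [← hcc]
        ring
    _ ≤ L^k * ∏ j ∈ Finset.univ.erase m, |a j - a m| :=
        mul_le_mul_of_nonneg_left hstep2 (by positivity)
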